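/- arXiv:0711.0165 — 4 statements merged into one kernel-verified Lean document; each statement's English description precedes it below -/
import Mathlib

section
/- Let Q be a quiver with vertex involution φ and arrow involution φ satisfying h(φ(a)) = φ(t(a)), and sign maps ε : Q₀ → {±1}, σ : Q₁ → {±1}. Define * on the path algebra ℂQ by v* = φ(v) for vertices and a* = σ_a ε_{h(a)} φ(a) for arrows, extended as an anti-homomorphism. If ε_v ε_{φ(v)} = 1 and σ_a σ_{φ(a)} = 1 for all v, a, then * is a well-defined anti-automorphism of ℂQ satisfying x** = ε x ε for all x ∈ ℂQ, where ε = Σ_v ε_v v. -/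
open scoped BigOperators

/-- The defining relations of the path algebra of a quiver with vertex set `V₀`,
arrow set `Q₁`, and head/tail maps `hd, tl`: the vertices are orthogonal idempotents
summing to `1`, and each arrow `a` satisfies `e_{hd a} · a = a = a · e_{tl a}`. -/
inductive PathAlgebraRel (V₀ Q₁ : Type) [Fintype V₀] (hd tl : Q₁ → V₀) :
    FreeAlgebra ℂ (V₀ ⊕ Q₁) → FreeAlgebra ℂ (V₀ ⊕ Q₁) → Prop
  | idem (v : V₀) : PathAlgebraRel V₀ Q₁ hd tl
      (FreeAlgebra.ι ℂ (Sum.inl v) * FreeAlgebra.ι ℂ (Sum.inl v))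
      (FreeAlgebra.ι ℂ (Sum.inl v))
  | orth (v w : V₀) (h : v ≠ w) : PathAlgebraRel V₀ Q₁ hd tl
      (FreeAlgebra.ι ℂ (Sum.inl v) * FreeAlgebra.ι ℂ (Sum.inl w)) 0
  | sum_one : PathAlgebraRel V₀ Q₁ hd tl
      (∑ v : V₀, FreeAlgebra.ι ℂ (Sum.inl v)) 1
  | head (a : Q₁) : PathAlgebraRel V₀ Q₁ hd tl
      (FreeAlgebra.ι ℂ (Sum.inl (hd a)) * FreeAlgebra.ι ℂ (Sum.inr a))
      (FreeAlgebra.ι ℂ (Sum.inr a))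
  | tail (a : Q₁) : PathAlgebraRel V₀ Q₁ hd tl
      (FreeAlgebra.ι ℂ (Sum.inr a) * FreeAlgebra.ι ℂ (Sum.inl (tl a)))
      (FreeAlgebra.ι ℂ (Sum.inr a))

/-- The path algebra `ℂQ` of a quiver, presented by generators and relations. -/
def PathAlgebra (V₀ Q₁ : Type) [Fintype V₀] (hd tl : Q₁ → V₀) : Type :=
  RingQuot (PathAlgebraRel V₀ Q₁ hd tl)

noncomputable instance (V₀ Q₁ : Type) [Fintype V₀] (hd tl : Q₁ → V₀) :
    Ring (PathAlgebra V₀ Q₁ hd tl) := by unfold PathAlgebra; infer_instance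

noncomputable instance (V₀ Q₁ : Type) [Fintype V₀] (hd tl : Q₁ → V₀) :
    Algebra ℂ (PathAlgebra V₀ Q₁ hd tl) := by unfold PathAlgebra; infer_instance

/-- The image of a vertex idempotent in the path algebra. -/
noncomputable def PathAlgebra.vertex (V₀ Q₁ : Type) [Fintype V₀] (hd tl : Q₁ → V₀)
    (v : V₀) : PathAlgebra V₀ Q₁ hd tl :=
  RingQuot.mkAlgHom ℂ (PathAlgebraRel V₀ Q₁ hd tl) (FreeAlgebra.ι ℂ (Sum.inl v))

/-- The image of an arrow in the path algebra. -/
noncomputable def PathAlgebra.arrow (V₀ Q₁ : Type) [Fintype V₀] (hd tl : Q₁ → V₀)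
    (a : Q₁) : PathAlgebra V₀ Q₁ hd tl :=
  RingQuot.mkAlgHom ℂ (PathAlgebraRel V₀ Q₁ hd tl) (FreeAlgebra.ι ℂ (Sum.inr a))

/-- Let `Q` be a quiver with vertex involution `φV`, arrow involution `φA` satisfying
`hd (φA a) = φV (tl a)`, and sign maps `ε : Q₀ → {±1}`, `σ : Q₁ → {±1}` with
`ε_v ε_{φ(v)} = 1` and `σ_a σ_{φ(a)} = 1`.  Then `v ↦ φ(v)`,
`a ↦ σ_a ε_{h(a)} φ(a)` extends to a well-defined linear anti-automorphism `*` of the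
path algebra `ℂQ` satisfying `x** = ε x ε` where `ε = Σ_v ε_v v`. -/
theorem pathAlgebra_antiautomorphism_exists
    (V₀ Q₁ : Type) [Fintype V₀] (hd tl : Q₁ → V₀)
    (φV : V₀ → V₀) (φA : Q₁ → Q₁)
    (hφV : ∀ v, φV (φV v) = v) (hφA : ∀ a, φA (φA a) = a)
    (hcompat : ∀ a, hd (φA a) = φV (tl a))
    (ε : V₀ → ℂ) (σ : Q₁ → ℂ)
    (hεsign : ∀ v, ε v = 1 ∨ ε v = -1) (hσsign : ∀ a, σ a = 1 ∨ σ a = -1)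
    (hε : ∀ v, ε v * ε (φV v) = 1) (hσa : ∀ a, σ a * σ (φA a) = 1) :
    ∃ star : PathAlgebra V₀ Q₁ hd tl ≃ₗ[ℂ] PathAlgebra V₀ Q₁ hd tl,
      (∀ x y : PathAlgebra V₀ Q₁ hd tl, star (x * y) = star y * star x) ∧
      (∀ v : V₀, star (PathAlgebra.vertex V₀ Q₁ hd tl v)
          = PathAlgebra.vertex V₀ Q₁ hd tl (φV v)) ∧
      (∀ a : Q₁, star (PathAlgebra.arrow V₀ Q₁ hd tl a)
          = (σ a * ε (hd a)) • PathAlgebra.arrow V₀ Q₁ hd tl (φA a)) ∧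
      (∀ x : PathAlgebra V₀ Q₁ hd tl,
        star (star x) = (∑ v : V₀, ε v • PathAlgebra.vertex V₀ Q₁ hd tl v) * x *
          (∑ v : V₀, ε v • PathAlgebra.vertex V₀ Q₁ hd tl v)) := by
  classical
  set A := PathAlgebra V₀ Q₁ hd tl with hA
  set rel := PathAlgebraRel V₀ Q₁ hd tl with hrel_def
  set vx : V₀ → A := PathAlgebra.vertex V₀ Q₁ hd tl with hvx
  set ar : Q₁ → A := PathAlgebra.arrow V₀ Q₁ hd tl with har
  -- basic relations in the path algebra
  have hvv : ∀ v, vx v * vx v = vx v := fun v => by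
    have h' := RingQuot.mkAlgHom_rel ℂ (PathAlgebraRel.idem (hd := hd) (tl := tl) v)
    rw [map_mul] at h'
    exact h'
  have hvw : ∀ v w, v ≠ w → vx v * vx w = 0 := fun v w h => by
    have h' := RingQuot.mkAlgHom_rel ℂ (PathAlgebraRel.orth (hd := hd) (tl := tl) v w h)
    rw [map_mul, map_zero] at h'
    exact h'
  have hsum : ∑ v : V₀, vx v = 1 := by
    have h' := RingQuot.mkAlgHom_rel ℂ (PathAlgebraRel.sum_one (hd := hd) (tl := tl))
    rw [map_sum, map_one] at h'
    exact h'
  have hha : ∀ a, vx (hd a) * ar a = ar a := fun a => by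
    have h' := RingQuot.mkAlgHom_rel ℂ (PathAlgebraRel.head (hd := hd) (tl := tl) a)
    rw [map_mul] at h'
    exact h'
  have hta : ∀ a, ar a * vx (tl a) = ar a := fun a => by
    have h' := RingQuot.mkAlgHom_rel ℂ (PathAlgebraRel.tail (hd := hd) (tl := tl) a)
    rw [map_mul] at h'
    exact h'
  have hva0 : ∀ w a, w ≠ hd a → vx w * ar a = 0 := fun w a h => by
    rw [← hha a, ← mul_assoc, hvw _ _ h, zero_mul]
  have hav0 : ∀ w a, w ≠ tl a → ar a * vx w = 0 := fun w a h => by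
    rw [← hta a, mul_assoc, hvw _ _ (Ne.symm h), mul_zero]
  -- sign facts
  have hε2 : ∀ v, ε v * ε v = 1 := fun v => by
    rcases hεsign v with h | h <;> rw [h] <;> ring
  have hσ2 : ∀ a, σ a * σ a = 1 := fun a => by
    rcases hσsign a with h | h <;> rw [h] <;> ring
  have hεφ : ∀ v, ε (φV v) = ε v := fun v => by
    have h1 := hε v
    rcases hεsign v with h | h <;> rw [h] at h1 ⊢ <;> [linear_combination h1; linear_combination -h1]
  have hσφ : ∀ a, σ (φA a) = σ a := fun a => by
    have h1 := hσa a
    rcases hσsign a with h | h <;> rw [h] at h1 ⊢ <;> [linear_combination h1; linear_combination -h1]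
  have hφVinj : Function.Injective φV := Function.Involutive.injective hφV
  have htlφ : ∀ a, tl (φA a) = φV (hd a) := fun a => by
    have h1 := hcompat (φA a)
    rw [hφA] at h1
    have h2 := congrArg φV h1
    rw [hφV] at h2
    exact h2.symm
  -- the anti-homomorphism into the opposite algebra
  let g : V₀ ⊕ Q₁ → Aᵐᵒᵖ := fun x =>
    match x with
    | .inl v => MulOpposite.op (vx (φV v))
    | .inr a => (σ a * ε (hd a)) • MulOpposite.op (ar (φA a))
  let f : FreeAlgebra ℂ (V₀ ⊕ Q₁) →ₐ[ℂ] Aᵐᵒᵖ := FreeAlgebra.lift ℂ g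
  have hfl : ∀ v, f (FreeAlgebra.ι ℂ (Sum.inl v)) = MulOpposite.op (vx (φV v)) := fun v => by
    simp [f, g]
  have hfr : ∀ a, f (FreeAlgebra.ι ℂ (Sum.inr a))
      = (σ a * ε (hd a)) • MulOpposite.op (ar (φA a)) := fun a => by
    simp [f, g]
  have hfrel : ∀ ⦃x y⦄, rel x y → f x = f y := by
    intro x y h
    induction h with
    | idem v =>
        rw [map_mul, hfl, ← MulOpposite.op_mul, hvv]
    | orth v w h =>
        rw [map_mul, hfl, hfl, ← MulOpposite.op_mul,
          hvw _ _ (fun e => h (hφVinj e).symm), MulOpposite.op_zero, map_zero]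
    | sum_one =>
        rw [map_sum, map_one]
        calc (∑ v : V₀, f (FreeAlgebra.ι ℂ (Sum.inl v)))
            = ∑ v : V₀, MulOpposite.op (vx (φV v)) :=
              Finset.sum_congr rfl fun v _ => hfl v
          _ = ∑ v : V₀, MulOpposite.op (vx v) :=
              Fintype.sum_equiv (Function.Involutive.toPerm φV hφV) _ _ (fun v => rfl)
          _ = MulOpposite.op (∑ v : V₀, vx v) := by
              simp only [← MulOpposite.opAddEquiv_apply]
              exact (map_sum (MulOpposite.opAddEquiv (α := A)) _ _).symm
          _ = 1 := by rw [hsum, MulOpposite.op_one]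
    | head a =>
        rw [map_mul, hfl, hfr, mul_smul_comm, ← MulOpposite.op_mul]
        congr 2
        rw [show φV (hd a) = tl (φA a) from (htlφ a).symm, hta]
    | tail a =>
        rw [map_mul, hfr, hfl, smul_mul_assoc, ← MulOpposite.op_mul]
        congr 2
        rw [show φV (tl a) = hd (φA a) from (hcompat a).symm, hha]
  let S : A →ₐ[ℂ] Aᵐᵒᵖ := RingQuot.liftAlgHom ℂ ⟨f, hfrel⟩
  have hSv : ∀ v, S (vx v) = MulOpposite.op (vx (φV v)) := fun v => by
    show (RingQuot.liftAlgHom ℂ ⟨f, hfrel⟩)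
      (RingQuot.mkAlgHom ℂ rel (FreeAlgebra.ι ℂ (Sum.inl v))) = _
    rw [RingQuot.liftAlgHom_mkAlgHom_apply, hfl]
  have hSa : ∀ a, S (ar a) = (σ a * ε (hd a)) • MulOpposite.op (ar (φA a)) := fun a => by
    show (RingQuot.liftAlgHom ℂ ⟨f, hfrel⟩)
      (RingQuot.mkAlgHom ℂ rel (FreeAlgebra.ι ℂ (Sum.inr a))) = _
    rw [RingQuot.liftAlgHom_mkAlgHom_apply, hfr]
  -- the star map as a linear map
  let L : A →ₗ[ℂ] A :=
    ((MulOpposite.opLinearEquiv ℂ (M := A)).symm.toLinearMap).comp S.toLinearMap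
  have hL : ∀ x, L x = MulOpposite.unop (S x) := fun _ => rfl
  have hLmul : ∀ x y : A, L (x * y) = L y * L x := fun x y => by
    simp only [hL, map_mul, MulOpposite.unop_mul]
  have hLv : ∀ v, L (vx v) = vx (φV v) := fun v => by
    rw [hL, hSv, MulOpposite.unop_op]
  have hLa : ∀ a, L (ar a) = (σ a * ε (hd a)) • ar (φA a) := fun a => by
    rw [hL, hSa, MulOpposite.unop_smul, MulOpposite.unop_op]
  -- the element E
  set E : A := ∑ v : V₀, ε v • vx v with hE
  have hEl : ∀ v, E * vx v = ε v • vx v := fun v => by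
    erw [hE, Finset.sum_mul, Finset.sum_eq_single v]
    · rw [smul_mul_assoc, hvv]
    · intro w _ hw
      rw [smul_mul_assoc, hvw _ _ hw, smul_zero]
    · intro h; exact absurd (Finset.mem_univ v) h
  have hEr : ∀ v, vx v * E = ε v • vx v := fun v => by
    erw [hE, Finset.mul_sum, Finset.sum_eq_single v]
    · rw [mul_smul_comm, hvv]
    · intro w _ hw
      rw [mul_smul_comm, hvw _ _ (Ne.symm hw), smul_zero]
    · intro h; exact absurd (Finset.mem_univ v) h
  have hEla : ∀ a, E * ar a = ε (hd a) • ar a := fun a => by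
    erw [hE, Finset.sum_mul, Finset.sum_eq_single (hd a)]
    · rw [smul_mul_assoc, hha]
    · intro w _ hw
      rw [smul_mul_assoc, hva0 _ _ hw, smul_zero]
    · intro h; exact absurd (Finset.mem_univ _) h
  have hEra : ∀ a, ar a * E = ε (tl a) • ar a := fun a => by
    erw [hE, Finset.mul_sum, Finset.sum_eq_single (tl a)]
    · rw [mul_smul_comm, hta]
    · intro w _ hw
      rw [mul_smul_comm, hav0 _ _ hw, smul_zero]
    · intro h; exact absurd (Finset.mem_univ _) h
  have hE2 : E * E = 1 := by
    conv_lhs => erw [hE, Finset.mul_sum]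
    calc (∑ v : V₀, E * (ε v • vx v))
        = ∑ v : V₀, vx v := by
          refine Finset.sum_congr rfl fun v _ => ?_
          rw [mul_smul_comm, hEl, smul_smul, hε2, one_smul]
      _ = 1 := hsum
  have hEE : ∀ x : A, E * (E * x) = x := fun x => by
    rw [← mul_assoc, hE2, one_mul]
  -- L ∘ L is conjugation by E
  have hLL : ∀ x : A, L (L x) = E * x * E := by
    intro x
    obtain ⟨y, rfl⟩ := RingQuot.mkAlgHom_surjective ℂ rel x
    induction y using FreeAlgebra.induction with
    | grade0 r =>
        rw [AlgHom.commutes]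
        show L (L ((algebraMap ℂ A) r)) = E * (algebraMap ℂ A) r * E
        have h1 : L (algebraMap ℂ A r) = algebraMap ℂ A r := by
          rw [hL, AlgHom.commutes, MulOpposite.algebraMap_apply, MulOpposite.unop_op]
        rw [h1, h1, Algebra.algebraMap_eq_smul_one, mul_smul_comm, mul_one,
          smul_mul_assoc, hE2]
    | grade1 z =>
        match z with
        | Sum.inl v =>
            show L (L (vx v)) = E * vx v * E
            rw [hLv, hLv, hφV, hEl, smul_mul_assoc, hEr, smul_smul, hε2, one_smul]
        | Sum.inr a =>
            show L (L (ar a)) = E * ar a * E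
            rw [hLa, map_smul, hLa, hφA, hcompat, hσφ, hεφ, smul_smul,
              hEla, smul_mul_assoc, hEra, smul_smul]
            congr 1
            linear_combination (ε (hd a) * ε (tl a)) * hσ2 a
    | mul a b ha hb =>
        have key : ∀ x y : A, L (L x) = E * x * E → L (L y) = E * y * E →
            L (L (x * y)) = E * (x * y) * E := by
          intro x y hx hy
          rw [hLmul, hLmul, hx, hy]
          simp only [mul_assoc]
          rw [hEE]
        rw [map_mul]
        exact key _ _ ha hb
    | add a b ha hb =>
        erw [map_add, map_add, map_add, ha, hb, mul_add, add_mul]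
  have hLE : L E = E := by
    rw [hE, map_sum]
    calc (∑ v : V₀, L (ε v • vx v))
        = ∑ v : V₀, ε v • vx (φV v) :=
          Finset.sum_congr rfl fun v _ => by rw [map_smul, hLv]
      _ = ∑ v : V₀, ε v • vx v := by
          refine Fintype.sum_equiv (Function.Involutive.toPerm φV hφV) _ _ (fun w => ?_)
          show ε w • vx (φV w) = ε (φV w) • vx (φV w)
          rw [hεφ]
  -- the inverse map
  let M : A →ₗ[ℂ] A := (@LinearMap.mulLeft ℂ A _ _ Algebra.toModule _ E).comp ((@LinearMap.mulRight ℂ A _ _ Algebra.toModule _ E).comp L)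
  have hM : ∀ x, M x = E * (L x * E) := fun _ => rfl
  have h1 : ∀ x, L (M x) = x := fun x => by
    rw [hM, hLmul, hLmul, hLE, hLL]
    simp only [mul_assoc]
    rw [hE2, mul_one, hEE]
  have h2 : ∀ x, M (L x) = x := fun x => by
    rw [hM, hLL]
    simp only [mul_assoc]
    rw [hE2, mul_one, hEE]
  refine ⟨LinearEquiv.ofLinear L M (LinearMap.ext h1) (LinearMap.ext h2),
    ?_, ?_, ?_, ?_⟩
  · intro x y
    simp only [LinearEquiv.ofLinear_apply]
    exact hLmul x y
  · intro v
    simp only [LinearEquiv.ofLinear_apply]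
    exact hLv v
  · intro a
    simp only [LinearEquiv.ofLinear_apply]
    exact hLa a
  · intro x
    simp only [LinearEquiv.ofLinear_apply]
    exact hLL x
end

section
/- Consider the quiver with one vertex of dimension n ≥ 2 and k loops. Then dim Rep(Q,α) − dim GL_α + 1 = k n² − n² + 1 is the dimension of the quotient iss(Q,α) when simples exist; in particular, simple representations exist if and only if k ≥ 2 (for n ≥ 2), or n = 1. -/
open Matrix Finset
open Fin.NatCast Fin.CommRing

/-- A tuple of `n×n` matrices is a simple representation of the one-vertex quiver with
`k` loops iff the matrices have no common invariant subspace other than `⊥` and `⊤`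
(and the space is nonzero). -/
def IsSimpleTuple (n k : ℕ) (A : Fin k → Matrix (Fin n) (Fin n) ℂ) : Prop :=
  (⊥ : Submodule ℂ (Fin n → ℂ)) ≠ ⊤ ∧
  ∀ U : Submodule ℂ (Fin n → ℂ),
    (∀ i : Fin k, ∀ x ∈ U, (A i).mulVec x ∈ U) → U = ⊥ ∨ U = ⊤

/-- If `U` is invariant under the diagonal matrix with distinct entries `0,1,…,n-1` and
contains a nonzero vector, then some standard basis vector belongs to `U`. -/
lemma aux_single_mem {n : ℕ} (U : Submodule ℂ (Fin n → ℂ))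
    (hU : ∀ x ∈ U, (Matrix.diagonal (fun i : Fin n => ((i : ℕ) : ℂ))).mulVec x ∈ U) :
    ∀ m : ℕ, ∀ x ∈ U, x ≠ 0 →
      (Finset.univ.filter (fun j => x j ≠ 0)).card ≤ m →
      ∃ i : Fin n, Pi.single i (1 : ℂ) ∈ U := by
  intro m
  induction m with
  | zero =>
    intro x hx hx0 hcard
    exfalso
    apply hx0
    funext j
    simp only [Pi.zero_apply]
    by_contra hj
    have hmem : j ∈ Finset.univ.filter (fun j => x j ≠ 0) := by simp [hj]
    have := Finset.card_pos.mpr ⟨j, hmem⟩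
    omega
  | succ m ih =>
    intro x hx hx0 hcard
    obtain ⟨i, hi⟩ : ∃ i, x i ≠ 0 := by
      by_contra h
      push_neg at h
      exact hx0 (funext fun j => h j)
    set y : Fin n → ℂ :=
      (Matrix.diagonal (fun i : Fin n => ((i : ℕ) : ℂ))).mulVec x - ((i : ℕ) : ℂ) • x with hy
    have hyU : y ∈ U := U.sub_mem (hU x hx) (U.smul_mem _ hx)
    have hyj : ∀ j, y j = (((j : ℕ) : ℂ) - ((i : ℕ) : ℂ)) * x j := by
      intro j
      simp only [hy, Pi.sub_apply, Matrix.mulVec_diagonal, Pi.smul_apply, smul_eq_mul]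
      ring
    have hcoe : ∀ j : Fin n, (((j : ℕ) : ℂ) - ((i : ℕ) : ℂ)) = 0 ↔ j = i := by
      intro j
      rw [sub_eq_zero]
      constructor
      · intro h
        exact Fin.ext (Nat.cast_injective h)
      · intro h; rw [h]
    by_cases h0 : y = 0
    · refine ⟨i, ?_⟩
      have hx_eq : Pi.single i (1 : ℂ) = (x i)⁻¹ • x := by
        funext j
        by_cases hji : j = i
        · subst hji; simp [inv_mul_cancel₀ hi]
        · have hj := hyj j
          rw [h0] at hj
          simp only [Pi.zero_apply] at hj
          have hc : (((j : ℕ) : ℂ) - ((i : ℕ) : ℂ)) ≠ 0 := fun hc => hji ((hcoe j).mp hc)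
          have hxj : x j = 0 := by
            rcases mul_eq_zero.mp hj.symm with h | h
            · exact absurd h hc
            · exact h
          simp [Pi.single_apply, hji, hxj]
      rw [hx_eq]
      exact U.smul_mem _ hx
    · have hsub : (Finset.univ.filter (fun j => y j ≠ 0)) ⊆
          (Finset.univ.filter (fun j => x j ≠ 0)).erase i := by
        intro j hj
        simp only [Finset.mem_filter, Finset.mem_univ, true_and] at hj
        rw [Finset.mem_erase]
        constructor
        · intro hji
          apply hj
          rw [hyj, hji, sub_self, zero_mul]
        · simp only [Finset.mem_filter, Finset.mem_univ, true_and]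
          intro hxj
          apply hj
          rw [hyj, hxj, mul_zero]
      have hmem : i ∈ Finset.univ.filter (fun j => x j ≠ 0) := by simp [hi]
      have h1 := Finset.card_le_card hsub
      rw [Finset.card_erase_of_mem hmem] at h1
      have hpos := Finset.card_pos.mpr ⟨i, hmem⟩
      exact ih y hyU h0 (by omega)

/-- For the quiver with one vertex of dimension `n` and `k` loops:
`dim Rep(Q,α) − dim GL_α + 1 = k n² − n² + 1` (the dimension of the quotient `iss(Q,α)`
when simples exist), and simple representations exist if and only if `n = 1`, or
`n ≥ 2` and `k ≥ 2`. -/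
theorem one_vertex_loops_simples_iff (n k : ℕ) :
    (Module.finrank ℂ (Fin k → Matrix (Fin n) (Fin n) ℂ) -
        Module.finrank ℂ (Matrix (Fin n) (Fin n) ℂ) + 1 = k * n ^ 2 - n ^ 2 + 1) ∧
    ((∃ A : Fin k → Matrix (Fin n) (Fin n) ℂ, IsSimpleTuple n k A) ↔
      (n = 1 ∨ (2 ≤ n ∧ 2 ≤ k))) := by
  constructor
  · have h1 : Module.finrank ℂ (Matrix (Fin n) (Fin n) ℂ) = n ^ 2 := by
      rw [Module.finrank_matrix]
      simp [sq]
    have h2 : Module.finrank ℂ (Fin k → Matrix (Fin n) (Fin n) ℂ) = k * n ^ 2 := by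
      rw [Module.finrank_pi_fintype]
      simp [h1]
    rw [h1, h2]
  constructor
  · -- forward: existence of simple implies n = 1 ∨ (2 ≤ n ∧ 2 ≤ k)
    rintro ⟨A, hne, hsimp⟩
    by_contra hcon
    push_neg at hcon
    obtain ⟨hn1, hk⟩ := hcon
    -- n = 0 is impossible
    rcases Nat.lt_or_ge n 1 with h0 | h1
    · interval_cases n
      exact hne (Subsingleton.elim _ _)
    rcases Nat.lt_or_ge n 2 with hlt | hn2
    · exact hn1 (by omega)
    have hk1 : k < 2 := hk hn2
    -- construct a proper nonzero invariant subspace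
    haveI : NeZero n := ⟨by omega⟩
    have hfr : Module.finrank ℂ (Fin n → ℂ) = n := by
      simp [Module.finrank_fintype_fun_eq_card]
    have key : ∀ v : Fin n → ℂ, v ≠ 0 →
        (∀ i : Fin k, ∀ x ∈ (Submodule.span ℂ ({v} : Set (Fin n → ℂ))), (A i).mulVec x ∈ (Submodule.span ℂ ({v} : Set (Fin n → ℂ)))) → False := by
      intro v hv hinv
      rcases hsimp (Submodule.span ℂ ({v} : Set (Fin n → ℂ))) hinv with hbot | htop
      · exact hv (by simpa [hbot] using Submodule.mem_span_singleton_self (R := ℂ) v)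
      · have := finrank_span_singleton (K := ℂ) hv
        rw [htop, finrank_top, hfr] at this
        omega
    interval_cases k
    · -- k = 0 : every subspace is invariant
      exact key (Pi.single 0 1) (by simp [Pi.single_eq_same, funext_iff]; exact ⟨0, one_ne_zero⟩)
        (fun i => i.elim0)
    · -- k = 1 : eigenvector
      haveI : Nontrivial (Fin n → ℂ) := by
        refine ⟨Pi.single 0 1, 0, ?_⟩
        intro h
        have := congrFun h 0
        simp [Pi.single_eq_same] at this
      obtain ⟨μ, hμ⟩ := Module.End.exists_eigenvalue ((A 0).mulVecLin)
      obtain ⟨v, hv⟩ := hμ.exists_hasEigenvector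
      apply key v hv.2
      intro i x hx
      obtain ⟨c, rfl⟩ := Submodule.mem_span_singleton.mp hx
      have hi0 : i = 0 := Subsingleton.elim i 0
      subst hi0
      have hAv : (A 0).mulVec v = μ • v := hv.apply_eq_smul
      rw [Matrix.mulVec_smul, hAv]
      exact Submodule.smul_mem _ _ (Submodule.smul_mem _ _ (Submodule.mem_span_singleton_self (R := ℂ) v))
  · -- backward
    rintro (rfl | ⟨hn, hk⟩)
    · -- n = 1
      refine ⟨fun _ => 0, ?_, ?_⟩
      · exact bot_ne_top
      · intro U _
        have hfr : Module.finrank ℂ (Fin 1 → ℂ) = 1 := by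
          simp [Module.finrank_fintype_fun_eq_card]
        have hle : Module.finrank ℂ U ≤ 1 := by
          have := Submodule.finrank_le U
          rwa [hfr] at this
        interval_cases h : Module.finrank ℂ U
        · exact Or.inl (Submodule.finrank_eq_zero.mp h)
        · exact Or.inr (Submodule.eq_top_of_finrank_eq (by rw [h, hfr]))
    · -- n ≥ 2, k ≥ 2
      haveI : NeZero n := ⟨by omega⟩
      set D : Matrix (Fin n) (Fin n) ℂ := Matrix.diagonal (fun i : Fin n => ((i : ℕ) : ℂ)) with hD
      set B : Matrix (Fin n) (Fin n) ℂ := fun j l => if j = l + 1 then 1 else 0 with hBdef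
      refine ⟨fun m => if (m : ℕ) = 0 then D else if (m : ℕ) = 1 then B else 0, ?_, ?_⟩
      · exact bot_ne_top
      · intro U hinv
        rcases eq_or_ne U ⊥ with hbot | hne
        · exact Or.inl hbot
        right
        have hDinv : ∀ x ∈ U, D.mulVec x ∈ U := by
          have := hinv ⟨0, by omega⟩
          simpa using this
        have hBinv : ∀ x ∈ U, B.mulVec x ∈ U := by
          have := hinv ⟨1, by omega⟩
          simpa using this
        -- get a nonzero element
        obtain ⟨x, hxU, hx0⟩ : ∃ x ∈ U, x ≠ 0 := by
          by_contra h
          push_neg at h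
          exact hne (le_antisymm (fun x hx => by simpa using h x hx) bot_le)
        obtain ⟨i, hiU⟩ := aux_single_mem U hDinv _ x hxU hx0 le_rfl
        -- B shifts basis vectors
        have hB : ∀ j : Fin n, B.mulVec (Pi.single j (1 : ℂ)) = Pi.single (j + 1) (1 : ℂ) := by
          intro j
          funext l
          rw [Matrix.mulVec_single]
          simp [hBdef, Pi.single_apply, eq_comm]
          rfl
        have hall : ∀ m : ℕ, Pi.single (i + (m : Fin n)) (1 : ℂ) ∈ U := by
          intro m
          induction m with
          | zero => simpa using hiU
          | succ m ihm =>
            have := hBinv _ ihm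
            rw [hB] at this
            have hcast : i + ((m + 1 : ℕ) : Fin n) = i + (m : Fin n) + 1 := by
              push_cast
              ring
            rw [hcast]
            exact this
        have hsingle : ∀ j : Fin n, Pi.single j (1 : ℂ) ∈ U := by
          intro j
          have := hall ((j - i : Fin n) : ℕ)
          rwa [Fin.cast_val_eq_self, add_sub_cancel] at this
        rw [Submodule.eq_top_iff']
        intro v
        have hv : v = ∑ j : Fin n, v j • (Pi.single j 1 : Fin n → ℂ) := by
          funext l
          simp [Pi.single_apply, Finset.sum_ite_eq']
        rw [hv]
        exact Submodule.sum_mem _ fun j _ => Submodule.smul_mem _ _ (hsingle j)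
end

section
/- Let V ≅ W ⊕ W' be a module over an algebra A with anti-automorphism * (x** = εxε), equipped with an ε-commuting *-compatible nondegenerate bilinear form, where W, W' are simple submodules with W ⊆ W⊥ and W' ⊆ W'⊥, and W ≅ W' as A-modules. Suppose V has no proper nonzero nondegenerate submodule. Identifying V = W ⊕ W via the isomorphism, there is a nondegenerate bilinear form ⟨,⟩₁ on W with ⟨(v,v'),(w,w')⟩_V = ⟨v,w'⟩₁ + ⟨w, εv'⟩₁, and ⟨,⟩₁ is (−ε)-commuting: ⟨v,w⟩₁ = −⟨w, εv⟩₁. -/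
/-- Symplectic-to-orthogonal correspondence, part (1).  Let `V = W ⊕ W` (two copies of a
simple module `W`, identified via the isomorphism `W ≅ W'`), carrying an `ε`-commuting
`*`-compatible nondegenerate bilinear form for which both copies of `W` are isotropic,
and suppose `V` has no proper nonzero nondegenerate submodule.  Then there is a
nondegenerate bilinear form `⟨,⟩₁` on `W` with
`⟨(v,v'),(w,w')⟩_V = ⟨v,w'⟩₁ + ⟨w, εv'⟩₁`, and `⟨,⟩₁` is `(−ε)`-commuting:
`⟨v,w⟩₁ = −⟨w, εv⟩₁`. -/
theorem symplectic_epsilon_simple_gives_minus_epsilon_form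
    (A : Type*) [Ring A] [Algebra ℂ A]
    (σ : A ≃ₗ[ℂ] A) (hσ : ∀ x y : A, σ (x * y) = σ y * σ x)
    (ε : A) (hεunit : IsUnit ε) (hε2 : ε * ε = 1)
    (hσσ : ∀ x : A, σ (σ x) = ε * x * ε)
    (W : Type*) [AddCommGroup W] [Module ℂ W] [Module A W] [IsScalarTower ℂ A W]
    [FiniteDimensional ℂ W] [IsSimpleModule A W]
    (BV : (W × W) →ₗ[ℂ] (W × W) →ₗ[ℂ] ℂ)
    (hnd : ∀ v : W × W, (∀ w : W × W, BV v w = 0) → v = 0)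
    (hcomm : ∀ v w : W × W, BV v w = BV w (ε • v))
    (hstar : ∀ (x : A) (v w : W × W), BV (x • v) w = BV v (σ x • w))
    (hiso1 : ∀ v w : W, BV (v, 0) (w, 0) = 0)
    (hiso2 : ∀ v w : W, BV (0, v) (0, w) = 0)
    (hepsimple : ∀ U : Submodule A (W × W), U ≠ ⊥ → U ≠ ⊤ →
      ∃ v ∈ U, v ≠ 0 ∧ ∀ w ∈ U, BV v w = 0) :
    ∃ B₁ : W →ₗ[ℂ] W →ₗ[ℂ] ℂ,
      (∀ v : W, (∀ w : W, B₁ v w = 0) → v = 0) ∧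
      (∀ v v' w w' : W, BV (v, v') (w, w') = B₁ v w' + B₁ w (ε • v')) ∧
      (∀ v w : W, B₁ v w = -B₁ w (ε • v)) := by
  -- ε acts as an involution
  have heeW : ∀ m : W, ε • ε • m = m := by
    intro m
    rw [← mul_smul, hε2, one_smul]
  have heeV : ∀ m : W × W, ε • ε • m = m := by
    intro m
    rw [← mul_smul, hε2, one_smul]
  -- B₁ v w = BV (v,0) (0,w), C v w = BV (0,v) (w,0)
  set B₁ : W →ₗ[ℂ] W →ₗ[ℂ] ℂ :=
    (BV.comp (LinearMap.inl ℂ W W)).compl₂ (LinearMap.inr ℂ W W) with hB₁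
  set C : W →ₗ[ℂ] W →ₗ[ℂ] ℂ :=
    (BV.comp (LinearMap.inr ℂ W W)).compl₂ (LinearMap.inl ℂ W W) with hC
  have hB₁app : ∀ v w : W, B₁ v w = BV (v, 0) (0, w) := fun v w => rfl
  have hCapp : ∀ v w : W, C v w = BV (0, v) (w, 0) := fun v w => rfl
  -- decomposition
  have hdec : ∀ v v' w w' : W, BV (v, v') (w, w') = B₁ v w' + C v' w := by
    intro v v' w w'
    have h1 : ((v, v') : W × W) = (v, 0) + (0, v') := by simp
    have h2 : ((w, w') : W × W) = (w, 0) + (0, w') := by simp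
    rw [h1, h2]
    simp only [map_add, LinearMap.add_apply]
    rw [hiso1, hiso2, hB₁app, hCapp]
    ring
  -- C in terms of B₁
  have hCB : ∀ v w : W, C v w = B₁ w (ε • v) := by
    intro v w
    rw [hCapp, hcomm, hB₁app]
    have : ε • ((0, v) : W × W) = (0, ε • v) := by simp [Prod.smul_def]
    rw [this]
  -- nondegeneracy of B₁ in first slot
  have hB₁nd : ∀ v : W, (∀ w : W, B₁ v w = 0) → v = 0 := by
    intro v hv
    have : ((v, 0) : W × W) = 0 := by
      apply hnd
      rintro ⟨w, w'⟩
      rw [hdec]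
      have : C 0 w = 0 := by rw [map_zero]; rfl
      rw [this, hv w', add_zero]
    simpa using congrArg Prod.fst this
  -- nondegeneracy in second slot (of BV)
  have hnd2 : ∀ u : W × W, (∀ z : W × W, BV z u = 0) → u = 0 := by
    intro u hu
    have h1 : ε • u = 0 := by
      apply hnd
      intro b
      rw [hcomm, heeV]
      exact hu b
    calc u = ε • ε • u := (heeV u).symm
    _ = 0 := by rw [h1, smul_zero]
  -- σ ε acts like ε
  have hσεop : ∀ z : W × W, σ ε • z = ε • z := by
    intro z
    have key : ∀ z : W × W, (σ ε * ε) • z = z := by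
      intro z
      have h : ∀ z' : W × W, BV z' ((σ ε * ε) • z - z) = 0 := by
        intro z'
        have hch : BV z' ((σ ε * ε) • z) = BV z' z := by
          calc BV z' ((σ ε * ε) • z) = BV z' (σ ε • ε • z) := by rw [mul_smul]
            _ = BV (ε • z') (ε • z) := (hstar ε z' (ε • z)).symm
            _ = BV (ε • z) (ε • ε • z') := hcomm _ _
            _ = BV (ε • z) z' := by rw [heeV]
            _ = BV z' (ε • ε • z) := hcomm _ _
            _ = BV z' z := by rw [heeV]
        rw [map_sub, hch, sub_self]
      exact sub_eq_zero.mp (hnd2 _ h)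
    have h5 : σ ε • ε • ε • z = ε • z := by rw [← mul_smul]; exact key (ε • z)
    rwa [heeV] at h5
  -- intertwining for B₁ and C
  have hB₁int : ∀ (x : A) (v w : W), B₁ (x • v) w = B₁ v (σ x • w) := by
    intro x v w
    rw [hB₁app, hB₁app]
    have h1 : (x • v, (0:W)) = x • ((v, 0) : W × W) := by simp [Prod.smul_def]
    have h2 : σ x • ((0, w) : W × W) = (0, σ x • w) := by simp [Prod.smul_def]
    rw [h1, hstar, h2]
  have hCint : ∀ (x : A) (v w : W), C (x • v) w = C v (σ x • w) := by
    intro x v w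
    rw [hCapp, hCapp]
    have h1 : ((0:W), x • v) = x • ((0, v) : W × W) := by simp [Prod.smul_def]
    have h2 : σ x • ((w, 0) : W × W) = (σ x • w, 0) := by simp [Prod.smul_def]
    rw [h1, hstar, h2]
  -- rule: B₁ (ε•v) w = B₁ v (ε•w)
  have hσεW : ∀ w : W, σ ε • w = ε • w := by
    intro w
    have := congrArg Prod.snd (hσεop (0, w))
    simpa [Prod.smul_def] using this
  have hR1 : ∀ v w : W, B₁ (ε • v) w = B₁ v (ε • w) := by
    intro v w
    rw [hB₁int ε v w, hσεW]
  haveI : Nontrivial W := IsSimpleModule.nontrivial A W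
  -- B₁ as a map into the dual is bijective
  have hinj : Function.Injective B₁ := by
    intro a b hab
    have : a - b = 0 := by
      apply hB₁nd
      intro w
      rw [map_sub, LinearMap.sub_apply, hab, sub_self]
    exact sub_eq_zero.mp this
  have hrank : Module.finrank ℂ W = Module.finrank ℂ (W →ₗ[ℂ] ℂ) :=
    (Subspace.dual_finrank_eq (K := ℂ) (V := W)).symm
  have hsurj : Function.Surjective B₁ :=
    (LinearMap.injective_iff_surjective_of_finrank_eq_finrank hrank).mp hinj
  let e : W ≃ₗ[ℂ] (W →ₗ[ℂ] ℂ) := LinearEquiv.ofBijective B₁ ⟨hinj, hsurj⟩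
  let T : W →ₗ[ℂ] W := e.symm.toLinearMap ∘ₗ C
  have hT : ∀ v : W, B₁ (T v) = C v := by
    intro v
    have := e.apply_symm_apply (C v)
    exact this
  have hTeq : ∀ (x : A) (v : W), T (x • v) = x • T v := by
    intro x v
    apply hinj
    rw [hT]
    ext w
    rw [hCint, hB₁int, hT]
  -- Schur: T is a scalar
  obtain ⟨c, hc⟩ := Module.End.exists_eigenvalue (T : Module.End ℂ W)
  obtain ⟨v₀, hv₀⟩ := hc.exists_hasEigenvector
  let U : Submodule A W :=
    { carrier := {v | T v = c • v}
      add_mem' := by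
        intro a b ha hb
        simp only [Set.mem_setOf_eq, map_add] at *
        rw [ha, hb, smul_add]
      zero_mem' := by simp
      smul_mem' := by
        intro x v hv
        simp only [Set.mem_setOf_eq] at *
        rw [hTeq, hv]
        exact (smul_comm c x v).symm }
  have hUtop : U = ⊤ := by
    rcases eq_bot_or_eq_top U with h | h
    · exfalso
      have hv₀U : v₀ ∈ U := hv₀.apply_eq_smul
      rw [h] at hv₀U
      exact hv₀.right (by simpa using hv₀U)
    · exact h
  have hTc : ∀ v : W, T v = c • v := by
    intro v
    have : v ∈ U := hUtop ▸ Submodule.mem_top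
    exact this
  have hCc : ∀ v w : W, C v w = c * B₁ v w := by
    intro v w
    rw [← hT, hTc, map_smul]
    rfl
  have hkey : ∀ v w : W, B₁ w (ε • v) = c * B₁ v w := by
    intro v w
    rw [← hCB, hCc]
  -- there is a nonzero value of B₁
  obtain ⟨va, hva⟩ := exists_ne (0 : W)
  have : ¬ ∀ w : W, B₁ va w = 0 := fun h => hva (hB₁nd va h)
  push_neg at this
  obtain ⟨wa, hwa⟩ := this
  -- c² = 1
  have hcc : c * c = 1 := by
    have h : B₁ va wa = c * (c * B₁ va wa) := by
      calc B₁ va wa = B₁ (ε • ε • va) wa := by rw [heeW]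
        _ = B₁ (ε • va) (ε • wa) := hR1 _ _
        _ = c * B₁ wa (ε • va) := hkey wa (ε • va)
        _ = c * (c * B₁ va wa) := by rw [hkey]
    have h2 : (c * c - 1) * B₁ va wa = 0 := by linear_combination -h
    rcases mul_eq_zero.mp h2 with h3 | h3
    · linear_combination h3
    · exact absurd h3 hwa
  -- exclude c = 1 via the diagonal submodule
  have hcne : c ≠ 1 := by
    intro hc1
    let d : W →ₗ[A] W × W := LinearMap.prod LinearMap.id LinearMap.id
    let Ud : Submodule A (W × W) := LinearMap.range d
    have hmem : ∀ u : W, (u, u) ∈ Ud := fun u => ⟨u, rfl⟩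
    have hbot : Ud ≠ ⊥ := by
      intro h
      have : ((va, va) : W × W) ∈ Ud := hmem va
      rw [h] at this
      exact hva (by simpa [Prod.ext_iff] using this)
    have htop : Ud ≠ ⊤ := by
      intro h
      have : ((va, 0) : W × W) ∈ Ud := h ▸ Submodule.mem_top
      obtain ⟨u, hu⟩ := this
      have h1 : u = va := congrArg Prod.fst hu
      have h2 : u = 0 := congrArg Prod.snd hu
      exact hva (h1 ▸ h2)
    obtain ⟨z, hzU, hz0, hzperp⟩ := hepsimple Ud hbot htop
    obtain ⟨u, hu⟩ := hzU
    have huz : ((u, u) : W × W) = z := hu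
    have hu0 : u ≠ 0 := by
      intro h
      apply hz0
      rw [← huz, h]
      rfl
    apply hu0
    apply hB₁nd
    intro w
    have h0 : BV (u, u) (w, w) = 0 := by
      rw [huz]
      exact hzperp _ (hmem w)
    rw [hdec, hCc, hc1, one_mul] at h0
    linear_combination h0 / 2
  have hcm1 : c = -1 := by
    have : (c - 1) * (c + 1) = 0 := by linear_combination hcc
    rcases mul_eq_zero.mp this with h | h
    · exact absurd (by linear_combination h) hcne
    · linear_combination h
  refine ⟨B₁, hB₁nd, ?_, ?_⟩
  · intro v v' w w'
    rw [hdec, hCB]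
  · intro v w
    rw [hkey, hcm1]
    ring
end

section
/- Let A be an algebra with anti-automorphism * satisfying x** = εxε, and let V = W ⊕ W* be a module with *-compatible ε-commuting nondegenerate pairing where W is simple, W ≇ W* as A-modules, and dim(vW) = dim(vW*) for every central idempotent v. Then W admits a nondegenerate symmetric bilinear form ⟨,⟩_W that is compatible with the degree-zero part of the algebra (⟨xv,w⟩ = ⟨v,x*w⟩ for x central idempotents), but W is not isomorphic to any module carrying a fully *-compatible such form. -/
section Aux

/-- A central idempotent acts as `0` or as the identity on a simple module. -/
lemma aux_central_idem_act {A : Type*} [Ring A] {M : Type*} [AddCommGroup M]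
    [Module A M] [IsSimpleModule A M] (x : A) (hx : x ∈ Set.center A)
    (hxi : IsIdempotentElem x) :
    (∀ v : M, x • v = (0 : M)) ∨ (∀ v : M, x • v = v) := by
  have hcomm : ∀ a : A, x * a = a * x := (Set.mem_center_iff.mp hx).comm
  let e : M →ₗ[A] M :=
    { toFun := fun v => x • v
      map_add' := fun v w => smul_add x v w
      map_smul' := fun a v => by
        simp only [RingHom.id_apply]
        rw [← mul_smul, hcomm a, mul_smul] }
  rcases eq_bot_or_eq_top (LinearMap.range e) with hbot | htop
  · left
    intro v
    have : e v ∈ LinearMap.range e := LinearMap.mem_range_self e v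
    rw [hbot] at this
    simpa [e] using this
  · right
    intro v
    obtain ⟨u, hu⟩ := LinearMap.range_eq_top.mp htop v
    have : e (e u) = e u := by
      show x • (x • u) = x • u
      rw [← mul_smul, hxi]
    rw [hu] at this
    simpa [e] using this

lemma aux_span_id {M : Type*} [AddCommGroup M] [Module ℂ M] [FiniteDimensional ℂ M]
    {A : Type*} [Ring A] [Module A M] (x : A) (h : ∀ v : M, x • v = v) :
    Module.finrank ℂ (Submodule.span ℂ ((x • ·) '' (Set.univ : Set M))) =
      Module.finrank ℂ M := by
  have himg : (x • ·) '' (Set.univ : Set M) = Set.univ := by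
    ext v; simp only [Set.image_univ, Set.mem_range, Set.mem_univ, iff_true]
    exact ⟨v, h v⟩
  rw [himg, Submodule.span_univ, finrank_top]

lemma aux_span_zero {M : Type*} [AddCommGroup M] [Module ℂ M]
    {A : Type*} [Ring A] [Module A M] (x : A) (h : ∀ v : M, x • v = (0 : M)) :
    Module.finrank ℂ (Submodule.span ℂ ((x • ·) '' (Set.univ : Set M))) = 0 := by
  have : Submodule.span ℂ ((x • ·) '' (Set.univ : Set M)) = ⊥ := by
    rw [Submodule.span_eq_bot]
    rintro v ⟨w, -, rfl⟩
    exact h w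
  rw [this, finrank_bot]

end Aux

/-- Symplectic-to-orthogonal correspondence, part (2): the general ε-simple case.
Let `V = W ⊕ W*` (`W` simple, `W* ` the dual module, here `W'` with a perfect pairing
`p` satisfying `p (x • f) v = p f (σ x • v)`), with a `*`-compatible `ε`-commuting
nondegenerate pairing, `W ≇ W*` as `A`-modules, and `dim (x • W) = dim (x • W*)` for
every central idempotent `x`.  Then `W` admits a nondegenerate symmetric bilinear form
compatible with the central idempotents (`⟨x v, w⟩ = ⟨v, x* w⟩`), but `W` carries no
nondegenerate symmetric form that is fully `*`-compatible. -/
theorem general_epsilon_simple_almost_mixed_not_mixed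
    (A : Type*) [Ring A] [Algebra ℂ A]
    (σ : A ≃ₗ[ℂ] A) (hσ : ∀ x y : A, σ (x * y) = σ y * σ x)
    (ε : A) (hεunit : IsUnit ε) (hε2 : ε * ε = 1)
    (hσσ : ∀ x : A, σ (σ x) = ε * x * ε)
    (W : Type*) [AddCommGroup W] [Module ℂ W] [Module A W] [IsScalarTower ℂ A W]
    [FiniteDimensional ℂ W] [IsSimpleModule A W]
    (W' : Type*) [AddCommGroup W'] [Module ℂ W'] [Module A W'] [IsScalarTower ℂ A W']
    [FiniteDimensional ℂ W']
    -- `W'` is the dual module of `W`: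
    (p : W' →ₗ[ℂ] W →ₗ[ℂ] ℂ)
    (hp1 : ∀ f : W', (∀ v : W, p f v = 0) → f = 0)
    (hp2 : ∀ v : W, (∀ f : W', p f v = 0) → v = 0)
    (hpdual : ∀ (x : A) (f : W') (v : W), p (x • f) v = p f (σ x • v))
    -- `W ≇ W*` as `A`-modules:
    (hnoniso : ¬ Nonempty (W ≃ₗ[A] W'))
    -- the hyperbolic `ε`-mixed structure on `V = W ⊕ W*`:
    (BV : (W × W') →ₗ[ℂ] (W × W') →ₗ[ℂ] ℂ)
    (hnd : ∀ v : W × W', (∀ w : W × W', BV v w = 0) → v = 0)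
    (hcomm : ∀ v w : W × W', BV v w = BV w (ε • v))
    (hstar : ∀ (x : A) (v w : W × W'), BV (x • v) w = BV v (σ x • w))
    -- `dim (x • W) = dim (x • W*)` for every central idempotent `x`:
    (hdim : ∀ x ∈ Set.center A, IsIdempotentElem x →
      Module.finrank ℂ (Submodule.span ℂ ((x • ·) '' (Set.univ : Set W))) =
        Module.finrank ℂ (Submodule.span ℂ ((x • ·) '' (Set.univ : Set W')))) :
    (∃ BW : W →ₗ[ℂ] W →ₗ[ℂ] ℂ,
      (∀ v : W, (∀ w : W, BW v w = 0) → v = 0) ∧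
      (∀ v w : W, BW v w = BW w v) ∧
      (∀ x ∈ Set.center A, IsIdempotentElem x →
        ∀ v w : W, BW (x • v) w = BW v (σ x • w))) ∧
    ¬ ∃ B' : W →ₗ[ℂ] W →ₗ[ℂ] ℂ,
      (∀ v : W, (∀ w : W, B' v w = 0) → v = 0) ∧
      (∀ v w : W, B' v w = B' w v) ∧
      (∀ (x : A) (v w : W), B' (x • v) w = B' v (σ x • w)) := by
  classical
  -- `p` is injective, hence `finrank W' = finrank W`.
  have hpinj : Function.Injective p := by
    rw [← LinearMap.ker_eq_bot, LinearMap.ker_eq_bot']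
    intro f hf
    exact hp1 f (fun v => by rw [hf]; rfl)
  have hqinj : Function.Injective p.flip := by
    rw [← LinearMap.ker_eq_bot, LinearMap.ker_eq_bot']
    intro v hv
    exact hp2 v (fun f => by have := congrArg (fun g => g f) hv; simpa using this)
  have hrank : Module.finrank ℂ W' = Module.finrank ℂ W := by
    have h1 : Module.finrank ℂ W' ≤ Module.finrank ℂ (W →ₗ[ℂ] ℂ) :=
      LinearMap.finrank_le_finrank_of_injective hpinj
    have h2 : Module.finrank ℂ W ≤ Module.finrank ℂ (W' →ₗ[ℂ] ℂ) :=
      LinearMap.finrank_le_finrank_of_injective hqinj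
    have e1 : Module.finrank ℂ (W →ₗ[ℂ] ℂ) = Module.finrank ℂ W :=
      Subspace.dual_finrank_eq
    have e2 : Module.finrank ℂ (W' →ₗ[ℂ] ℂ) = Module.finrank ℂ W' :=
      Subspace.dual_finrank_eq
    omega
  have hWnontriv : Nontrivial W := IsSimpleModule.nontrivial A W
  have hWpos : 0 < Module.finrank ℂ W := Module.finrank_pos
  constructor
  · -- Part 1: a nondegenerate symmetric form compatible with central idempotents.
    let b := Module.finBasis ℂ W
    refine ⟨LinearMap.mk₂ ℂ (fun v w => ∑ i, b.coord i v * b.coord i w)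
      (fun v v' w => by simp [add_mul, Finset.sum_add_distrib])
      (fun c v w => by simp [Finset.mul_sum, mul_assoc])
      (fun v w w' => by simp [mul_add, Finset.sum_add_distrib])
      (fun c v w => by
        simp [Finset.mul_sum, smul_eq_mul, mul_left_comm]), ?_, ?_, ?_⟩
    · intro v hv
      refine (b.forall_coord_eq_zero_iff).mp (fun j => ?_)
      have := hv (b j)
      simp only [LinearMap.mk₂_apply] at this
      rw [← this]
      simp [Module.Basis.coord_apply, Module.Basis.repr_self, Finsupp.single_apply, mul_ite,
        Finset.sum_ite_eq]
    · intro v w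
      simp only [LinearMap.mk₂_apply]
      exact Finset.sum_congr rfl fun i _ => mul_comm _ _
    · intro x hx hxi v w
      -- `σ x` is also a central idempotent.
      have hcommA : ∀ a : A, x * a = a * x := (Set.mem_center_iff.mp hx).comm
      have hσxc : ∀ a : A, σ x * a = a * σ x := by
        intro a
        have : σ x * σ (σ.symm a) = σ (σ.symm a) * σ x := by
          rw [← hσ, ← hσ, hcommA]
        simpa using this
      have hσxcen : σ x ∈ Set.center A :=
        Set.mem_center_iff.mpr ⟨fun a => hσxc a, fun b c => by
            rw [mul_assoc], fun a b => by rw [mul_assoc]⟩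
      have hσxi : IsIdempotentElem (σ x) := by
        unfold IsIdempotentElem
        rw [← hσ, hxi]
      -- dichotomies for the actions of `x` and `σ x` on `W`
      rcases aux_central_idem_act (M := W) x hx hxi with hx0 | hx1
      · rcases aux_central_idem_act (M := W) (σ x) hσxcen hσxi with hs0 | hs1
        · -- both act by zero
          have h1 : x • v = (0 : W) := hx0 v
          have h2 : σ x • w = (0 : W) := hs0 w
          rw [h1, h2]
          simp
        · -- impossible: `dim (x • W) = 0 < dim (x • W') = dim W`
          exfalso
          have hxW' : ∀ f : W', x • f = f := by
            intro f
            have : x • f - f = 0 := by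
              apply hp1
              intro u
              rw [map_sub, LinearMap.sub_apply, hpdual, hs1, sub_self]
            have := sub_eq_zero.mp this
            exact this
          have h0 := aux_span_zero (M := W) x hx0
          have h1 := aux_span_id (M := W') x hxW'
          have := hdim x hx hxi
          rw [h0, h1, hrank] at this
          omega
      · rcases aux_central_idem_act (M := W) (σ x) hσxcen hσxi with hs0 | hs1
        · -- impossible: `dim (x • W) = dim W > 0 = dim (x • W')`
          exfalso
          have hxW' : ∀ f : W', x • f = 0 := by
            intro f
            apply hp1
            intro u
            rw [hpdual, hs0, map_zero]
          have h0 := aux_span_id (M := W) x hx1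
          have h1 := aux_span_zero (M := W') x hxW'
          have := hdim x hx hxi
          rw [h0, h1] at this
          omega
        · -- both act by the identity
          rw [hx1, hs1]
  · -- Part 2: no fully `*`-compatible nondegenerate symmetric form on `W`.
    rintro ⟨B', hB'nd, hB'symm, hB'star⟩
    -- `p` realizes `W'` as the dual of `W`; transport `B'` to a map `T : W → W'`.
    have hpbij : Function.Bijective p :=
      ⟨hpinj, by
        rw [← LinearMap.range_eq_top]
        apply Submodule.eq_top_of_finrank_eq
        rw [LinearMap.finrank_range_of_inj hpinj, hrank,
          Subspace.dual_finrank_eq]⟩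
    let Φ : W' ≃ₗ[ℂ] (W →ₗ[ℂ] ℂ) := LinearEquiv.ofBijective p hpbij
    let T : W →ₗ[ℂ] W' := Φ.symm.toLinearMap ∘ₗ B'
    have hT : ∀ (v : W) (w : W), p (T v) w = B' v w := by
      intro v w
      have h1 : Φ (Φ.symm (B' v)) = B' v := Φ.apply_symm_apply _
      have h2 : p (Φ.symm (B' v)) = B' v := h1
      simp only [T, LinearMap.comp_apply, LinearEquiv.coe_coe]
      rw [h2]
    have hTsmul : ∀ (x : A) (v : W), T (x • v) = x • T v := by
      intro x v
      have h : T (x • v) - x • T v = 0 := by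
        apply hp1
        intro w
        rw [map_sub, LinearMap.sub_apply, hT, hpdual, hT, hB'star, sub_self]
      have := sub_eq_zero.mp h
      exact this
    have hTinj : Function.Injective T := by
      rw [← LinearMap.ker_eq_bot, LinearMap.ker_eq_bot']
      intro v hv
      refine hB'nd v (fun w => ?_)
      rw [← hT v w, hv, map_zero, LinearMap.zero_apply]
    have hTsurj : Function.Surjective T := by
      rw [← LinearMap.range_eq_top]
      apply Submodule.eq_top_of_finrank_eq
      rw [LinearMap.finrank_range_of_inj hTinj, hrank]
    let f : W →ₗ[A] W' :=
      { toFun := T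
        map_add' := T.map_add
        map_smul' := fun x v => by simpa using hTsmul x v }
    exact hnoniso ⟨LinearEquiv.ofBijective f ⟨hTinj, hTsurj⟩⟩
end
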